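/- If B = [b_{ij}] is an n×n complex matrix with all entries b_{ij} ≥ 0, then w(B) = r((B + B*)/2), where r denotes the spectral radius; in particular w(B) = w((B+B*)/2). -/

import Mathlib

/-- The numerical radius of a bounded linear operator on a complex Hilbert space:
`w(T) = sup {|⟨Tx, x⟩| : ‖x‖ = 1}`. -/
noncomputable def numRad {H : Type*} [NormedAddCommGroup H] [InnerProductSpace ℂ H]
    (T : H →L[ℂ] H) : ℝ :=
  sSup {r : ℝ | ∃ x : H, ‖x‖ = 1 ∧ r = ‖(inner ℂ (T x) x : ℂ)‖}

/-- The absolute value `|T| = (T*T)^{1/2}` of a bounded operator. -/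
noncomputable def absOp {H : Type*} [NormedAddCommGroup H] [InnerProductSpace ℂ H]
    [CompleteSpace H] (T : H →L[ℂ] H) : H →L[ℂ] H :=
  CFC.sqrt (ContinuousLinearMap.adjoint T * T)

/-- The numerical radius of a complex `n × n` matrix. -/
noncomputable def numRadMat {n : ℕ} (M : Matrix (Fin n) (Fin n) ℂ) : ℝ :=
  numRad (Matrix.toEuclideanCLM (𝕜 := ℂ) M)

section numRadLemmas
open ContinuousLinearMap

variable {H : Type*} [NormedAddCommGroup H] [InnerProductSpace ℂ H]

local notation "⟪" x ", " y "⟫" => @inner ℂ _ _ x y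

lemma numRad_mem_le (T : H →L[ℂ] H) {r : ℝ}
    (hr : r ∈ {r : ℝ | ∃ x : H, ‖x‖ = 1 ∧ r = ‖(inner ℂ (T x) x : ℂ)‖}) : r ≤ ‖T‖ := by
  obtain ⟨x, hx, rfl⟩ := hr
  calc ‖(inner ℂ (T x) x : ℂ)‖ ≤ ‖T x‖ * ‖x‖ := norm_inner_le_norm _ _
    _ ≤ ‖T‖ * ‖x‖ * ‖x‖ := by gcongr; exact T.le_opNorm x
    _ = ‖T‖ := by rw [hx]; ring

lemma numRad_bddAbove (T : H →L[ℂ] H) :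
    BddAbove {r : ℝ | ∃ x : H, ‖x‖ = 1 ∧ r = ‖(inner ℂ (T x) x : ℂ)‖} :=
  ⟨‖T‖, fun _ hr => numRad_mem_le T hr⟩

lemma numRad_nonneg (T : H →L[ℂ] H) : 0 ≤ numRad T :=
  Real.sSup_nonneg (fun r hr => by obtain ⟨x, _, rfl⟩ := hr; exact norm_nonneg _)

lemma numRad_le_norm (T : H →L[ℂ] H) : numRad T ≤ ‖T‖ :=
  Real.sSup_le (fun _ hr => numRad_mem_le T hr) (norm_nonneg T)

lemma inner_le_numRad (T : H →L[ℂ] H) (x : H) :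
    ‖(inner ℂ (T x) x : ℂ)‖ ≤ numRad T * ‖x‖ ^ 2 := by
  rcases eq_or_ne x 0 with rfl | hx
  · simp
  · have hxn : ‖x‖ ≠ 0 := norm_ne_zero_iff.2 hx
    set u : H := (‖x‖⁻¹ : ℂ) • x with hu
    have hu1 : ‖u‖ = 1 := by
      rw [hu, norm_smul]
      simp [norm_inv, hxn]
    have hmem : ‖⟪T u, u⟫‖ ≤ numRad T :=
      le_csSup (numRad_bddAbove T) ⟨u, hu1, rfl⟩
    have hTu : ⟪T u, u⟫ = (‖x‖⁻¹ : ℂ) * (starRingEnd ℂ) (‖x‖⁻¹ : ℂ) * ⟪T x, x⟫ := by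
      rw [hu, map_smul, inner_smul_left, inner_smul_right]; ring
    have : ‖⟪T u, u⟫‖ = (‖x‖⁻¹) ^ 2 * ‖⟪T x, x⟫‖ := by
      rw [hTu]
      rw [norm_mul, norm_mul, RCLike.norm_conj]
      have h9 : ‖((‖x‖ : ℂ))⁻¹‖ = ‖x‖⁻¹ := by
        rw [norm_inv, Complex.norm_real, Real.norm_of_nonneg (norm_nonneg x)]
      rw [h9]; ring
    have hpos : (0:ℝ) < ‖x‖ := lt_of_le_of_ne (norm_nonneg x) (Ne.symm hxn)
    rw [this] at hmem
    calc ‖⟪T x, x⟫‖ = (‖x‖⁻¹ ^ 2 * ‖⟪T x, x⟫‖) * ‖x‖ ^ 2 := by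
          field_simp
      _ ≤ numRad T * ‖x‖ ^ 2 := by
          apply mul_le_mul_of_nonneg_right hmem (sq_nonneg _)

lemma norm_le_numRad [CompleteSpace H] {T : H →L[ℂ] H} (hT : IsSelfAdjoint T) :
    ‖T‖ ≤ numRad T := by
  refine T.opNorm_le_bound (numRad_nonneg T) (fun x => ?_)
  rcases eq_or_ne (T x) 0 with h0 | h0
  · rw [h0, norm_zero]
    exact mul_nonneg (numRad_nonneg T) (norm_nonneg x)
  have hx0 : x ≠ 0 := by rintro rfl; simp at h0
  have hxpos : (0:ℝ) < ‖x‖ := norm_pos_iff.2 hx0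
  have hTxpos : (0:ℝ) < ‖T x‖ := norm_pos_iff.2 h0
  have hsym : ∀ u v : H, ⟪T u, v⟫ = ⟪u, T v⟫ := fun u v => hT.isSymmetric u v
  have key : ∀ u v : H, 4 * Complex.re ⟪T u, v⟫ ≤ numRad T * (2 * ‖u‖^2 + 2 * ‖v‖^2) := by
    intro u v
    have e1 : ⟪T (u+v), u+v⟫ - ⟪T (u-v), u-v⟫ = 2 * (⟪T u, v⟫ + ⟪T v, u⟫) := by
      simp only [map_add, map_sub, inner_add_left, inner_add_right, inner_sub_left,
        inner_sub_right]
      ring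
    have e2 : Complex.re ⟪T v, u⟫ = Complex.re ⟪T u, v⟫ := by
      rw [hsym v u]
      simpa using inner_re_symm (𝕜 := ℂ) v (T u)
    have e3 : 4 * Complex.re ⟪T u, v⟫ =
        Complex.re ⟪T (u+v), u+v⟫ - Complex.re ⟪T (u-v), u-v⟫ := by
      have := congrArg Complex.re e1
      simp only [Complex.sub_re, Complex.mul_re, Complex.add_re] at this ⊢
      rw [this]
      simp [e2]
      ring
    have b1 : Complex.re ⟪T (u+v), u+v⟫ ≤ numRad T * ‖u+v‖^2 :=
      le_trans (Complex.re_le_norm _) (le_trans le_rfl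
        (by exact inner_le_numRad T (u+v)))
    have b2 : - (numRad T * ‖u-v‖^2) ≤ Complex.re ⟪T (u-v), u-v⟫ := by
      have h := inner_le_numRad T (u-v)
      have := Complex.abs_re_le_norm (⟪T (u-v), u-v⟫)
      have := abs_le.1 (le_trans this h)
      linarith [this.1]
    have hpar : ‖u+v‖^2 + ‖u-v‖^2 = 2 * (‖u‖^2 + ‖v‖^2) := by
      have := parallelogram_law_with_norm ℂ u v
      linarith [this]
    calc 4 * Complex.re ⟪T u, v⟫
        = Complex.re ⟪T (u+v), u+v⟫ - Complex.re ⟪T (u-v), u-v⟫ := e3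
      _ ≤ numRad T * ‖u+v‖^2 + numRad T * ‖u-v‖^2 := by linarith
      _ = numRad T * (2 * ‖u‖^2 + 2 * ‖v‖^2) := by rw [← mul_add, hpar]; ring
  set c : ℝ := ‖x‖ / ‖T x‖ with hc
  have hcpos : 0 < c := div_pos hxpos hTxpos
  have hre : Complex.re ⟪T x, (c:ℂ) • T x⟫ = c * ‖T x‖^2 := by
    have h5 : (⟪T x, T x⟫ : ℂ).re = ‖T x‖^2 := by
      simpa using inner_self_eq_norm_sq (𝕜 := ℂ) (T x)
    rw [inner_smul_right, Complex.mul_re, h5]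
    simp
  have hny : ‖(c:ℂ) • T x‖ = ‖x‖ := by
    rw [norm_smul, Complex.norm_real, Real.norm_of_nonneg hcpos.le, hc]
    field_simp
  have := key x ((c:ℂ) • T x)
  rw [hre, hny, hc] at this
  have h4 : 4 * (‖x‖ / ‖T x‖ * ‖T x‖^2) = 4 * ‖x‖ * ‖T x‖ := by
    field_simp
  nlinarith [this, h4, hxpos, hTxpos]

lemma numRad_eq_norm [CompleteSpace H] {T : H →L[ℂ] H} (hT : IsSelfAdjoint T) :
    numRad T = ‖T‖ :=
  le_antisymm (numRad_le_norm T) (norm_le_numRad hT)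

lemma numRad_le_numRad_of (T S : H →L[ℂ] H)
    (h : ∀ x : H, ‖x‖ = 1 → ∃ y : H, ‖y‖ = 1 ∧
      ‖(inner ℂ (T x) x : ℂ)‖ ≤ ‖(inner ℂ (S y) y : ℂ)‖) :
    numRad T ≤ numRad S := by
  unfold numRad
  refine Real.sSup_le ?_ (numRad_nonneg S)
  rintro r ⟨x, hx, rfl⟩
  obtain ⟨y, hy, hle⟩ := h x hx
  exact le_trans hle (le_csSup (numRad_bddAbove S) ⟨y, hy, rfl⟩)

end numRadLemmas

lemma inner_toEuclideanCLM {n : ℕ} (M : Matrix (Fin n) (Fin n) ℂ) (x : EuclideanSpace ℂ (Fin n)) :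
    (inner ℂ x (Matrix.toEuclideanCLM (𝕜 := ℂ) M x) : ℂ) =
      ∑ i, ∑ j, (starRingEnd ℂ) (x i) * M i j * x j := by
  have h : ∀ i, (Matrix.toEuclideanCLM (𝕜 := ℂ) M x) i = ∑ j, M i j * x j := fun i => rfl
  simp only [PiLp.inner_apply, RCLike.inner_apply, h, Finset.mul_sum, Finset.sum_mul]
  exact Finset.sum_congr rfl (fun i _ => Finset.sum_congr rfl (fun j _ => by ring))

open ContinuousLinearMap in
/-- The key comparison providing `w(B) ≤ w(A)` for entrywise-nonnegative `B`: replace a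
unit vector `x` by the entrywise-absolute-value vector `y`. -/
lemma exists_unit_vector_le {n : ℕ} (B A : Matrix (Fin n) (Fin n) ℂ) (b : Fin n → Fin n → ℝ)
    (hb0 : ∀ i j, 0 ≤ b i j) (hbB : ∀ i j, B i j = ((b i j : ℝ) : ℂ))
    (hAent : ∀ i j, A i j = (((b i j + b j i) / 2 : ℝ) : ℂ))
    (x : EuclideanSpace ℂ (Fin n)) (hx : ‖x‖ = 1) :
    ∃ y : EuclideanSpace ℂ (Fin n), ‖y‖ = 1 ∧
      ‖(inner ℂ ((Matrix.toEuclideanCLM (𝕜 := ℂ) B) x) x : ℂ)‖ ≤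
      ‖(inner ℂ ((Matrix.toEuclideanCLM (𝕜 := ℂ) A) y) y : ℂ)‖ := by
  set y : EuclideanSpace ℂ (Fin n) :=
    (WithLp.equiv 2 (Fin n → ℂ)).symm (fun i => (‖x i‖ : ℂ)) with hy
  have hyi : ∀ i, y i = (‖x i‖ : ℂ) := fun i => rfl
  have hynorm : ∀ i, ‖y i‖ = ‖x i‖ := by
    intro i
    rw [hyi, Complex.norm_real, norm_norm]
  have hy1 : ‖y‖ = 1 := by
    rw [EuclideanSpace.norm_eq] at hx ⊢
    rw [show (∑ i, ‖y i‖ ^ 2) = ∑ i, ‖x i‖ ^ 2 from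
      Finset.sum_congr rfl fun i _ => by rw [hynorm]]
    exact hx
  set S : ℝ := ∑ i, ∑ j, b i j * (‖x i‖ * ‖x j‖) with hSdef
  have hS0 : 0 ≤ S :=
    Finset.sum_nonneg fun i _ => Finset.sum_nonneg fun j _ =>
      mul_nonneg (hb0 i j) (mul_nonneg (norm_nonneg _) (norm_nonneg _))
  have hflip : ∀ (M : Matrix (Fin n) (Fin n) ℂ) (z : EuclideanSpace ℂ (Fin n)),
      ‖(inner ℂ ((Matrix.toEuclideanCLM (𝕜 := ℂ) M) z) z : ℂ)‖ =
      ‖(inner ℂ z ((Matrix.toEuclideanCLM (𝕜 := ℂ) M) z) : ℂ)‖ := by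
    intro M z
    rw [← inner_conj_symm, RCLike.norm_conj]
  have hle : ‖(inner ℂ ((Matrix.toEuclideanCLM (𝕜 := ℂ) B) x) x : ℂ)‖ ≤ S := by
    rw [hflip, inner_toEuclideanCLM]
    calc ‖∑ i, ∑ j, (starRingEnd ℂ) (x i) * B i j * x j‖
        ≤ ∑ i, ‖∑ j, (starRingEnd ℂ) (x i) * B i j * x j‖ := norm_sum_le _ _
      _ ≤ ∑ i, ∑ j, ‖(starRingEnd ℂ) (x i) * B i j * x j‖ :=
          Finset.sum_le_sum fun i _ => norm_sum_le _ _
      _ = S := by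
          refine Finset.sum_congr rfl fun i _ => Finset.sum_congr rfl fun j _ => ?_
          rw [hbB, norm_mul, norm_mul, RCLike.norm_conj, Complex.norm_real,
            Real.norm_of_nonneg (hb0 i j)]
          ring
  have hswap : ∑ i, ∑ j, b j i * (‖x i‖ * ‖x j‖) = S := by
    rw [hSdef, Finset.sum_comm]
    exact Finset.sum_congr rfl fun i _ => Finset.sum_congr rfl fun j _ => by ring
  have heq : (inner ℂ y ((Matrix.toEuclideanCLM (𝕜 := ℂ) A) y) : ℂ) = (S : ℂ) := by
    rw [inner_toEuclideanCLM]
    have hterm : ∀ i j, (starRingEnd ℂ) (y i) * A i j * y j =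
        (((b i j + b j i) / 2 * (‖x i‖ * ‖x j‖) : ℝ) : ℂ) := by
      intro i j
      rw [hyi, hyi, hAent, Complex.conj_ofReal]
      push_cast
      ring
    simp only [hterm]
    rw [show (∑ i, ∑ j, (((b i j + b j i) / 2 * (‖x i‖ * ‖x j‖) : ℝ) : ℂ))
        = ((∑ i, ∑ j, (b i j + b j i) / 2 * (‖x i‖ * ‖x j‖) : ℝ) : ℂ) by push_cast; rfl]
    rw [Complex.ofReal_inj]
    have expand : ∑ i, ∑ j, (b i j + b j i) / 2 * (‖x i‖ * ‖x j‖)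
        = (∑ i, ∑ j, b i j * (‖x i‖ * ‖x j‖)) / 2
          + (∑ i, ∑ j, b j i * (‖x i‖ * ‖x j‖)) / 2 := by
      rw [Finset.sum_div, Finset.sum_div, ← Finset.sum_add_distrib]
      refine Finset.sum_congr rfl fun i _ => ?_
      rw [Finset.sum_div, Finset.sum_div, ← Finset.sum_add_distrib]
      exact Finset.sum_congr rfl fun j _ => by ring
    rw [expand, hswap, ← hSdef]
    ring
  refine ⟨y, hy1, le_trans hle ?_⟩
  rw [hflip, heq, Complex.norm_real, Real.norm_of_nonneg hS0]

open ContinuousLinearMap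
theorem stmt7 {n : ℕ} (B : Matrix (Fin n) (Fin n) ℂ)
    (hB : ∀ i j, ∃ r : ℝ, 0 ≤ r ∧ B i j = (r : ℂ)) :
    numRadMat B =
      (spectralRadius ℂ (Matrix.toEuclideanCLM (𝕜 := ℂ)
        ((1 / 2 : ℂ) • (B + star B)))).toReal ∧
    numRadMat B = numRadMat ((1 / 2 : ℂ) • (B + star B)) := by
  classical
  choose b hb using hB
  have hb0 : ∀ i j, 0 ≤ b i j := fun i j => (hb i j).1
  have hbB : ∀ i j, B i j = ((b i j : ℝ) : ℂ) := fun i j => (hb i j).2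
  set A : Matrix (Fin n) (Fin n) ℂ := (1 / 2 : ℂ) • (B + star B) with hA
  have hAent : ∀ i j, A i j = (((b i j + b j i) / 2 : ℝ) : ℂ) := by
    intro i j
    rw [hA, Matrix.smul_apply, Matrix.add_apply, Matrix.star_apply, hbB, hbB,
      RCLike.star_def, Complex.conj_ofReal, smul_eq_mul]
    push_cast
    ring
  have hAself : IsSelfAdjoint A := by
    rw [IsSelfAdjoint]
    ext i j
    rw [Matrix.star_apply, hAent j i, hAent i j, RCLike.star_def, Complex.conj_ofReal]
    norm_cast
    ring
  have hTA : IsSelfAdjoint (Matrix.toEuclideanCLM (𝕜 := ℂ) A) := by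
    rw [IsSelfAdjoint, ← map_star]
    exact congrArg _ hAself.star_eq
  have hTAdef : Matrix.toEuclideanCLM (𝕜 := ℂ) A =
      (1 / 2 : ℂ) • (Matrix.toEuclideanCLM (𝕜 := ℂ) B +
        star (Matrix.toEuclideanCLM (𝕜 := ℂ) B)) := by
    rw [hA, map_smul, map_add, map_star]
  have hkey : numRadMat B = numRadMat A := by
    apply le_antisymm
    · exact numRad_le_numRad_of _ _ (fun x hx =>
        exists_unit_vector_le B A b hb0 hbB hAent x hx)
    · refine numRad_le_numRad_of _ _ (fun x hx => ⟨x, hx, ?_⟩)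
      set T := Matrix.toEuclideanCLM (𝕜 := ℂ) B
      set z : ℂ := inner ℂ (T x) x with hz
      have hinner : (inner ℂ ((Matrix.toEuclideanCLM (𝕜 := ℂ) A) x) x : ℂ) =
          (starRingEnd ℂ) ((1:ℂ)/2) * (z + (starRingEnd ℂ) z) := by
        rw [hTAdef, smul_apply, add_apply, inner_smul_left, inner_add_left,
          star_eq_adjoint, adjoint_inner_left, ← inner_conj_symm]
        rw [inner_conj_symm, ← inner_conj_symm x (T x), ← hz]
      rw [hinner]
      calc ‖(starRingEnd ℂ) ((1:ℂ)/2) * (z + (starRingEnd ℂ) z)‖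
          = (1/2) * ‖z + (starRingEnd ℂ) z‖ := by
            rw [norm_mul, RCLike.norm_conj]
            norm_num
        _ ≤ (1/2) * (‖z‖ + ‖(starRingEnd ℂ) z‖) := by
            gcongr
            exact norm_add_le _ _
        _ = ‖z‖ := by rw [RCLike.norm_conj]; ring
  refine ⟨?_, hkey⟩
  rw [hkey, hTA.spectralRadius_eq_nnnorm, ENNReal.coe_toReal, coe_nnnorm]
  exact numRad_eq_norm hTA
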